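/- The principal value distribution ζ^{−1}, defined by ζ^{−1}(φ) = lim_{ε→0} ∫_{|x|>ε} φ(x)/x dx, belongs to the Besov space B^{−1+1/p}_{p,∞}(ℝ) for every p ∈ (1,∞]. -/

import Mathlib

open MeasureTheory Real Filter ENNReal

noncomputable section

/-- Fourier transform of a real-valued Schwartz function. -/
def szFT (f : SchwartzMap ℝ ℝ) : ℝ → ℂ :=
  FourierTransform.fourier (fun x => (f x : ℂ))

/-- The `j`-th Littlewood–Paley kernel built from a low-frequency kernel `hlow` (corresponding
to the block `Δ_{-1}`) and a kernel `h`; index `j+1` corresponds to the block `Δ_j`, with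
kernel `h_j(y) = 2^j h(2^j y)`. -/
def lpKernel (hlow h : SchwartzMap ℝ ℝ) : ℕ → ℝ → ℝ
  | 0 => fun y => hlow y
  | (j + 1) => fun y => (2 : ℝ) ^ j * h ((2 : ℝ) ^ j * y)

/-- The `j`-th Littlewood–Paley block `Δ_{j-1} f = h_{j-1} * f`. -/
def lpBlock (hlow h : SchwartzMap ℝ ℝ) (j : ℕ) (f : ℝ → ℝ) : ℝ → ℝ :=
  fun x => ∫ y : ℝ, lpKernel hlow h j y * f (x - y)

/-- The nonhomogeneous Besov norm `‖f‖_{B^γ_{p,∞}} = sup_{j ≥ -1} 2^(jγ) ‖Δ_j f‖_{L_p}`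
(our index `j : ℕ` corresponds to the Littlewood–Paley level `j - 1`). -/
def besovNorm (hlow h : SchwartzMap ℝ ℝ) (γ : ℝ) (p : ℝ≥0∞) (f : ℝ → ℝ) : ℝ≥0∞ :=
  ⨆ j : ℕ, ENNReal.ofReal ((2 : ℝ) ^ (((j : ℝ) - 1) * γ)) * eLpNorm (lpBlock hlow h j f) p volume

/-- `(hlow, h)` is a standard Littlewood–Paley pair: `𝓕 hlow` is supported in a ball,
`𝓕 h` is supported in an annulus, and together they form a dyadic partition of unity. -/
def IsLPpair (hlow h : SchwartzMap ℝ ℝ) : Prop :=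
  (∀ ξ : ℝ, 4 / 3 < |ξ| → szFT hlow ξ = 0) ∧
  (∀ ξ : ℝ, |ξ| < 3 / 4 ∨ 8 / 3 < |ξ| → szFT h ξ = 0) ∧
  (∀ ξ : ℝ, szFT hlow ξ + ∑' j : ℕ, szFT h ((2 : ℝ) ^ (-(j : ℝ)) * ξ) = 1)

/-- The `j`-th Littlewood–Paley block of the principal value distribution `ζ^{-1} = p.v.(1/x)`:
`Δ_{j-1} ζ^{-1}(x) = ∫_0^∞ (h_{j-1}(x−y) − h_{j-1}(x+y))/y dy`. -/
def pvBlock (hlow h : SchwartzMap ℝ ℝ) (j : ℕ) : ℝ → ℝ :=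
  fun x => ∫ y in Set.Ioi (0 : ℝ), (lpKernel hlow h j (x - y) - lpKernel hlow h j (x + y)) / y

lemma pv_integrand_bound_smooth (f : SchwartzMap ℝ ℝ) {A : ℝ}
    (hd : ∀ z : ℝ, |deriv f z| ≤ A) (x y : ℝ) (hy : 0 < y) :
    |(f (x - y) - f (x + y)) / y| ≤ 2 * A := by
  have key : |f (x - y) - f (x + y)| ≤ A * |(x - y) - (x + y)| := by
    have := convex_univ.norm_image_sub_le_of_norm_deriv_le (f := (f : ℝ → ℝ))
      (fun z _ => f.differentiable.differentiableAt)
      (fun z _ => hd z) (Set.mem_univ (x + y)) (Set.mem_univ (x - y))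
    simpa [Real.norm_eq_abs] using this
  have h2 : |(x - y) - (x + y)| = 2 * y := by
    rw [show (x - y) - (x + y) = -(2*y) by ring, abs_neg, abs_of_pos (by linarith)]
  rw [abs_div, abs_of_pos hy, div_le_iff₀ hy]
  calc |f (x - y) - f (x + y)| ≤ A * (2 * y) := by rw [← h2]; exact key
  _ = 2 * A * y := by ring

lemma pv_integrand_bound_decay (f : SchwartzMap ℝ ℝ) {A : ℝ} (hA : 0 ≤ A)
    (hd : ∀ z : ℝ, (1 + z^2) * |deriv f z| ≤ A) (x y : ℝ) (hy : 0 < y) (hxy : y ≤ |x| / 2) :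
    |(f (x - y) - f (x + y)) / y| ≤ 8 * A / (1 + x^2) := by
  have hx2 : (0:ℝ) < 1 + x^2 := by positivity
  have key : |f (x - y) - f (x + y)| ≤ (4 * A / (1 + x^2)) * |(x - y) - (x + y)| := by
    have hbd : ∀ z ∈ Set.uIcc (x + y) (x - y), ‖deriv f z‖ ≤ 4 * A / (1 + x^2) := by
      intro z hz
      have hzx : |z - x| ≤ y := by
        rcases Set.mem_uIcc.1 hz with h | h <;> rw [abs_le] <;>
          constructor <;> linarith [h.1, h.2]
      have hzabs : |x| / 2 ≤ |z| := by
        have := abs_sub_abs_le_abs_sub x z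
        rw [abs_sub_comm] at this
        linarith
      have hz2 : (1 + x^2) / 4 ≤ 1 + z^2 := by
        have h1 : (|x|/2)^2 ≤ |z|^2 := by
          apply sq_le_sq' <;> nlinarith [abs_nonneg x, abs_nonneg z]
        nlinarith [sq_abs z, sq_abs x]
      have hdz := hd z
      rw [Real.norm_eq_abs]; rw [le_div_iff₀ hx2]
      nlinarith [abs_nonneg (deriv f z)]
    have := (convex_uIcc (x+y) (x-y)).norm_image_sub_le_of_norm_deriv_le
      (f := (f : ℝ → ℝ)) (fun z _ => f.differentiable.differentiableAt) hbd
      Set.left_mem_uIcc Set.right_mem_uIcc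
    simpa [Real.norm_eq_abs] using this
  have h2 : |(x - y) - (x + y)| = 2 * y := by
    rw [show (x - y) - (x + y) = -(2*y) by ring, abs_neg, abs_of_pos (by linarith)]
  rw [abs_div, abs_of_pos hy, div_le_iff₀ hy]
  calc |f (x - y) - f (x + y)| ≤ (4 * A / (1 + x^2)) * (2 * y) := by rw [← h2]; exact key
  _ = 8 * A / (1 + x^2) * y := by ring

lemma pv_meas (f : SchwartzMap ℝ ℝ) (x : ℝ) :
    AEStronglyMeasurable (fun y => (f (x - y) - f (x + y)) / y) volume := by
  apply Measurable.aestronglyMeasurable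
  apply Measurable.div
  · exact ((f.continuous.measurable.comp (measurable_const.sub measurable_id)).sub
      (f.continuous.measurable.comp (measurable_const.add measurable_id)))
  · exact measurable_id

lemma pv_integrableOn (f : SchwartzMap ℝ ℝ) {A : ℝ}
    (hd : ∀ z : ℝ, |deriv f z| ≤ A) (x : ℝ) :
    IntegrableOn (fun y => (f (x - y) - f (x + y)) / y) (Set.Ioi (0:ℝ)) volume := by
  have hm := pv_meas f x
  have hIoc : IntegrableOn (fun y => (f (x - y) - f (x + y)) / y) (Set.Ioc (0:ℝ) 1) volume := by
    apply Measure.integrableOn_of_bounded (M := 2 * A)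
    · simp
    · exact hm
    · filter_upwards [ae_restrict_mem measurableSet_Ioc] with y hy
      exact (Real.norm_eq_abs _).le.trans (pv_integrand_bound_smooth f hd x y hy.1)
  have hIoi : IntegrableOn (fun y => (f (x - y) - f (x + y)) / y) (Set.Ioi (1:ℝ)) volume := by
    have hg : Integrable (fun y : ℝ => |f (x - y)| + |f (x + y)|) volume :=
      ((f.integrable.comp_sub_left x).abs.add (f.integrable.comp_add_left x).abs)
    apply Integrable.mono' hg.integrableOn hm.restrict
    filter_upwards [ae_restrict_mem measurableSet_Ioi] with y hy
    have hy1 : (1:ℝ) ≤ y := le_of_lt hy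
    have hy0 : (0:ℝ) < y := lt_of_lt_of_le one_pos hy1
    rw [Real.norm_eq_abs, abs_div, abs_of_pos hy0, div_le_iff₀ hy0]
    calc |f (x - y) - f (x + y)| ≤ |f (x - y)| + |f (x + y)| := abs_sub _ _
    _ = (|f (x - y)| + |f (x + y)|) * 1 := (mul_one _).symm
    _ ≤ (|f (x - y)| + |f (x + y)|) * y := by
        apply mul_le_mul_of_nonneg_left hy1 (by positivity)
  have : Set.Ioc (0:ℝ) 1 ∪ Set.Ioi (1:ℝ) = Set.Ioi (0:ℝ) := Set.Ioc_union_Ioi_eq_Ioi zero_le_one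
  rw [← this]
  exact hIoc.union hIoi

lemma abs_f_integral_translate (f : SchwartzMap ℝ ℝ) (x : ℝ) :
    (∫ y : ℝ, (|f (x - y)| + |f (x + y)|)) = 2 * ∫ z : ℝ, |f z| := by
  rw [integral_add (f.integrable.comp_sub_left x).abs (f.integrable.comp_add_left x).abs]
  have h1 : (∫ y : ℝ, |f (x - y)|) = ∫ z : ℝ, |f z| :=
    integral_sub_left_eq_self (fun z => |f z|) volume x
  have h2 : (∫ y : ℝ, |f (x + y)|) = ∫ z : ℝ, |f z| :=
    integral_add_left_eq_self (μ := volume) x (f := fun z => |f z|)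
  rw [h1, h2]; ring

lemma schwartz_pv_decay (f : SchwartzMap ℝ ℝ) :
    ∃ C : ℝ, 0 ≤ C ∧ ∀ x : ℝ,
      |∫ y in Set.Ioi (0:ℝ), (f (x - y) - f (x + y)) / y| ≤ C / (1 + |x|) := by
  obtain ⟨A, hA, hf0, hf1, hf2⟩ : ∃ A : ℝ, 0 ≤ A ∧ (∀ z : ℝ, |f z| ≤ A) ∧
      (∀ z : ℝ, |deriv f z| ≤ A) ∧ (∀ z : ℝ, (1 + z^2) * |deriv f z| ≤ A) := by
    obtain ⟨A0, hA0pos, hA0⟩ := (SchwartzMap.derivCLM ℝ ℝ f).decay 0 0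
    obtain ⟨A2, hA2pos, hA2⟩ := (SchwartzMap.derivCLM ℝ ℝ f).decay 2 0
    obtain ⟨B0, hB0pos, hB0⟩ := f.decay 0 0
    refine ⟨B0 + (A0 + A2), by positivity, ?_, ?_, ?_⟩
    · intro z
      have := hB0 z
      simp [norm_iteratedFDeriv_zero] at this
      have h1 : (0:ℝ) ≤ A0 + A2 := by positivity
      calc |f z| ≤ B0 := by simpa [abs_le] using this
      _ ≤ _ := by linarith
    · intro z
      have := hA0 z
      simp [norm_iteratedFDeriv_zero, SchwartzMap.derivCLM_apply] at this
      nlinarith [abs_nonneg (deriv f z)]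
    · intro z
      have h0 := hA0 z
      have h2 := hA2 z
      simp only [norm_iteratedFDeriv_zero, SchwartzMap.derivCLM_apply, pow_zero, one_mul,
        Real.norm_eq_abs] at h0 h2
      have : |z|^2 * |deriv f z| ≤ A2 := h2
      nlinarith [abs_nonneg (deriv f z), sq_abs z, abs_nonneg z]
  set I := ∫ z : ℝ, |f z| with hI
  have hInn : 0 ≤ I := integral_nonneg (fun z => abs_nonneg _)
  refine ⟨6 * A + 12 * I, by positivity, fun x => ?_⟩
  set φ : ℝ → ℝ := fun y => (f (x - y) - f (x + y)) / y with hφ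
  have hint : IntegrableOn φ (Set.Ioi (0:ℝ)) volume := pv_integrableOn f hf1 x
  have hx1 : (0:ℝ) < 1 + |x| := by positivity
  -- the crude bound B1
  have habs : ∀ c : ℝ, 0 < c →
      (∫ y in Set.Ioi c, |φ y|) ≤ (2 / c) * (2 * I) := by
    intro c hc
    have hg : Integrable (fun y : ℝ => (2/c) * (|f (x - y)| + |f (x + y)|)) volume :=
      (((f.integrable.comp_sub_left x).abs.add (f.integrable.comp_add_left x).abs)).const_mul _
    have step1 : (∫ y in Set.Ioi c, |φ y|) ≤
        ∫ y in Set.Ioi c, (2/c) * (|f (x - y)| + |f (x + y)|) := by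
      apply setIntegral_mono_on (hint.mono_set (Set.Ioi_subset_Ioi hc.le)).abs
        hg.integrableOn measurableSet_Ioi
      intro y hy
      have hyc : c < y := hy
      have hy0 : 0 < y := hc.trans hyc
      rw [hφ, abs_div, abs_of_pos hy0]
      calc |f (x - y) - f (x + y)| / y ≤ (|f (x - y)| + |f (x + y)|) / y := by
            gcongr
            exact abs_sub _ _
      _ ≤ (2/c) * (|f (x - y)| + |f (x + y)|) := by
            rw [div_le_iff₀ hy0]
            have h2c : 1 ≤ (2/c) * y := by
              rw [div_mul_eq_mul_div, le_div_iff₀ hc]; linarith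
            nlinarith [abs_nonneg (f (x-y)), abs_nonneg (f (x+y))]
    have step2 : (∫ y in Set.Ioi c, (2/c) * (|f (x - y)| + |f (x + y)|)) ≤
        ∫ y : ℝ, (2/c) * (|f (x - y)| + |f (x + y)|) := by
      apply setIntegral_le_integral hg
      filter_upwards with y
      positivity
    have step3 : (∫ y : ℝ, (2/c) * (|f (x - y)| + |f (x + y)|)) = (2/c) * (2 * I) := by
      rw [MeasureTheory.integral_const_mul, abs_f_integral_translate]
    linarith [step1.trans (step2.trans_eq step3)]
  have hIoc_bound : ∀ c M : ℝ, 0 < c → 0 ≤ M → (∀ y, 0 < y → y ≤ c → |φ y| ≤ M) →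
      (∫ y in Set.Ioc (0:ℝ) c, |φ y|) ≤ M * c := by
    intro c M hc hM hb
    have h1 : (∫ y in Set.Ioc (0:ℝ) c, |φ y|) ≤ ∫ _y in Set.Ioc (0:ℝ) c, M := by
      apply setIntegral_mono_on
        ((hint.mono_set (Set.Ioc_subset_Ioi_self)).abs)
        (integrableOn_const (by simp [Real.volume_Ioc]))
        measurableSet_Ioc
      exact fun y hy => hb y hy.1 hy.2
    have h2 : (∫ _y in Set.Ioc (0:ℝ) c, M) = M * c := by
      rw [setIntegral_const, Real.volume_real_Ioc, smul_eq_mul,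
        max_eq_left (by linarith), sub_zero, mul_comm]
    linarith
  have hsplit : ∀ c : ℝ, 0 < c → (∫ y in Set.Ioi (0:ℝ), |φ y|) =
      (∫ y in Set.Ioc (0:ℝ) c, |φ y|) + ∫ y in Set.Ioi c, |φ y| := by
    intro c hc
    rw [← setIntegral_union (Set.Ioc_disjoint_Ioi le_rfl) measurableSet_Ioi
      ((hint.mono_set Set.Ioc_subset_Ioi_self).abs)
      ((hint.mono_set (Set.Ioi_subset_Ioi hc.le)).abs),
      Set.Ioc_union_Ioi_eq_Ioi hc.le]
  have habsint : |∫ y in Set.Ioi (0:ℝ), φ y| ≤ ∫ y in Set.Ioi (0:ℝ), |φ y| := by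
    simpa [Real.norm_eq_abs] using
      norm_integral_le_integral_norm (μ := volume.restrict (Set.Ioi (0:ℝ))) φ
  -- B1
  have hB1 : |∫ y in Set.Ioi (0:ℝ), φ y| ≤ 2 * A + 4 * I := by
    have p1 : (∫ y in Set.Ioc (0:ℝ) 1, |φ y|) ≤ (2 * A) * 1 :=
      hIoc_bound 1 (2*A) one_pos (by positivity)
        (fun y hy _ => pv_integrand_bound_smooth f hf1 x y hy)
    have p2 := habs 1 one_pos
    rw [hsplit 1 one_pos] at habsint
    norm_num at p1 p2 ⊢
    linarith
  -- B2
  have hB2 : |x| * |∫ y in Set.Ioi (0:ℝ), φ y| ≤ 4 * A + 8 * I := by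
    rcases eq_or_ne x 0 with hx | hx
    · simp [hx]; positivity
    · have hxpos : 0 < |x| := abs_pos.2 hx
      have hc : 0 < |x| / 2 := by linarith
      have p1 : (∫ y in Set.Ioc (0:ℝ) (|x|/2), |φ y|) ≤ (8 * A / (1 + x^2)) * (|x|/2) :=
        hIoc_bound (|x|/2) _ hc (by positivity)
          (fun y hy hyc => pv_integrand_bound_decay f hA hf2 x y hy hyc)
      have p2 : (∫ y in Set.Ioi (|x|/2), |φ y|) ≤ (2 / (|x|/2)) * (2 * I) := habs _ hc
      rw [hsplit _ hc] at habsint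
      have key : |x| * ((8 * A / (1 + x^2)) * (|x|/2)) ≤ 4 * A := by
        rw [div_mul_eq_mul_div, mul_div_assoc' (|x|),
          div_le_iff₀ (by positivity : (0:ℝ) < 1 + x^2)]
        nlinarith [sq_abs x, abs_nonneg x]
      have key2 : |x| * ((2 / (|x|/2)) * (2 * I)) = 8 * I := by
        field_simp; ring
      have := mul_le_mul_of_nonneg_left habsint (abs_nonneg x)
      rw [mul_add] at this
      have h3 : |x| * (∫ y in Set.Ioc (0:ℝ) (|x|/2), |φ y|) ≤ 4 * A := by
        calc |x| * _ ≤ |x| * ((8 * A / (1 + x^2)) * (|x|/2)) :=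
              mul_le_mul_of_nonneg_left p1 (abs_nonneg x)
        _ ≤ 4 * A := key
      have h4 : |x| * (∫ y in Set.Ioi (|x|/2), |φ y|) ≤ 8 * I := by
        calc |x| * _ ≤ |x| * ((2 / (|x|/2)) * (2 * I)) :=
              mul_le_mul_of_nonneg_left p2 (abs_nonneg x)
        _ = 8 * I := key2
      linarith
  rw [le_div_iff₀ hx1]
  have expand : |∫ y in Set.Ioi (0:ℝ), φ y| * (1 + |x|)
      = |∫ y in Set.Ioi (0:ℝ), φ y| + |x| * |∫ y in Set.Ioi (0:ℝ), φ y| := by ring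
  rw [expand]
  linarith


lemma majorant_eLpNorm_lt_top {C : ℝ} (hC : 0 ≤ C) {p : ℝ≥0∞} (hp : 1 < p) :
    eLpNorm (fun x : ℝ => C / (1 + |x|)) p volume < ⊤ := by
  have hcont : Continuous (fun x : ℝ => C / (1 + |x|)) := by
    apply Continuous.div continuous_const (by continuity)
    intro x; positivity
  have hnonneg : ∀ x : ℝ, 0 ≤ C / (1 + |x|) := fun x => by positivity
  rcases eq_or_ne p ⊤ with hpt | hpt
  · rw [hpt, eLpNorm_exponent_top]
    apply lt_of_le_of_lt (eLpNormEssSup_le_of_ae_bound (C := C) ?_) ENNReal.ofReal_lt_top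
    filter_upwards with x
    rw [Real.norm_eq_abs, abs_of_nonneg (hnonneg x)]
    calc C / (1 + |x|) ≤ C / 1 := by
          apply div_le_div_of_nonneg_left ?_ ?_ ?_ <;> first | positivity | linarith [abs_nonneg x]
    _ = C := div_one C
  · have hp0 : p ≠ 0 := by positivity
    have hr : 1 < p.toReal := by
      have := ENNReal.toReal_lt_toReal (by norm_num : (1:ℝ≥0∞) ≠ ⊤) hpt |>.mpr hp
      simpa using this
    have hr0 : 0 ≤ p.toReal := by positivity
    rw [eLpNorm_eq_lintegral_rpow_enorm_toReal hp0 hpt]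
    apply ENNReal.rpow_lt_top_of_nonneg (by positivity)
    refine LT.lt.ne ?_
    have hint : Integrable (fun x : ℝ => (C / (1 + |x|)) ^ p.toReal) volume := by
      have hbase : Integrable (fun x : ℝ => C ^ p.toReal * (1 + ‖x‖) ^ (-p.toReal))
          (volume : Measure ℝ) := by
        apply Integrable.const_mul
        apply integrable_one_add_norm
        simpa using hr
      apply hbase.congr
      filter_upwards with x
      have hpos : (0:ℝ) < 1 + |x| := by positivity
      rw [Real.norm_eq_abs, Real.rpow_neg hpos.le, Real.div_rpow hC hpos.le,
        div_eq_mul_inv]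
    have heq : (∫⁻ x : ℝ, (‖C / (1 + |x|)‖₊ : ℝ≥0∞) ^ p.toReal) =
        ∫⁻ x : ℝ, ENNReal.ofReal ((C / (1 + |x|)) ^ p.toReal) := by
      apply lintegral_congr
      intro x
      rw [← enorm_eq_nnnorm, Real.enorm_eq_ofReal (hnonneg x), ENNReal.ofReal_rpow_of_nonneg (hnonneg x) hr0]
    calc (∫⁻ x : ℝ, (‖C / (1 + |x|)‖₊ : ℝ≥0∞) ^ p.toReal)
        = ∫⁻ x : ℝ, ENNReal.ofReal ((C / (1 + |x|)) ^ p.toReal) := heq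
    _ < ⊤ := hint.lintegral_lt_top


/-- The pv-convolution of a Schwartz function. -/
def pvH (f : SchwartzMap ℝ ℝ) : ℝ → ℝ :=
  fun x => ∫ y in Set.Ioi (0 : ℝ), (f (x - y) - f (x + y)) / y

lemma pvBlock_zero (hlow h : SchwartzMap ℝ ℝ) : pvBlock hlow h 0 = pvH hlow := rfl

lemma pvBlock_succ (hlow h : SchwartzMap ℝ ℝ) (j : ℕ) (x : ℝ) :
    pvBlock hlow h (j + 1) x = (2:ℝ)^j * pvH h ((2:ℝ)^j * x) := by
  have hc : (0:ℝ) < (2:ℝ)^j := by positivity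
  set F : ℝ → ℝ := fun u => (h ((2:ℝ)^j * x - u) - h ((2:ℝ)^j * x + u)) / u with hF
  have hfun : ∀ y : ℝ, (lpKernel hlow h (j+1) (x - y) - lpKernel hlow h (j+1) (x + y)) / y
      = ((2:ℝ)^j * (2:ℝ)^j) • F ((2:ℝ)^j * y) := by
    intro y
    simp only [lpKernel, hF, smul_eq_mul]
    rcases eq_or_ne y 0 with hy | hy
    · simp [hy]
    · have h2 : (2:ℝ)^j * y ≠ 0 := mul_ne_zero hc.ne' hy
      field_simp
  have : pvBlock hlow h (j+1) x = ∫ y in Set.Ioi (0:ℝ), ((2:ℝ)^j * (2:ℝ)^j) • F ((2:ℝ)^j * y) := by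
    unfold pvBlock
    exact setIntegral_congr_fun measurableSet_Ioi (fun y _ => hfun y)
  rw [this, integral_smul, integral_comp_mul_left_Ioi F 0 hc, mul_zero]
  simp only [smul_eq_mul]
  rw [← mul_assoc]
  have : (2:ℝ)^j * (2:ℝ)^j * ((2:ℝ)^j)⁻¹ = (2:ℝ)^j := by field_simp
  rw [this]
  rfl


lemma elp_scale {g : ℝ → ℝ} (hg : Continuous g) (j : ℕ) (p : ℝ≥0∞) :
    eLpNorm (fun x : ℝ => (2:ℝ)^j * g ((2:ℝ)^j * x)) p volume
      = ENNReal.ofReal ((2:ℝ)^j) * (ENNReal.ofReal (((2:ℝ)^j)⁻¹)) ^ (1/p).toReal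
        * eLpNorm g p volume := by
  have hc : (0:ℝ) < (2:ℝ)^j := by positivity
  have h1 : (fun x : ℝ => (2:ℝ)^j * g ((2:ℝ)^j * x))
      = ((2:ℝ)^j) • (g ∘ fun x : ℝ => (2:ℝ)^j * x) := rfl
  rw [h1, eLpNorm_const_smul]
  have h2 : eLpNorm (g ∘ fun x : ℝ => (2:ℝ)^j * x) p volume
      = eLpNorm g p (Measure.map (fun x : ℝ => (2:ℝ)^j * x) volume) := by
    refine (eLpNorm_map_measure ?_ ?_).symm
    · exact hg.aestronglyMeasurable
    · exact (measurable_const_mul _).aemeasurable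
  rw [h2, Real.map_volume_mul_left hc.ne',
    eLpNorm_smul_measure_of_ne_zero (by simp [abs_of_pos, hc] : ENNReal.ofReal |((2:ℝ)^j)⁻¹| ≠ 0),
    abs_of_pos (inv_pos.2 hc)]
  simp only [smul_eq_mul (α := ℝ≥0∞), ← mul_assoc]
  congr 1
  rw [Real.enorm_eq_ofReal hc.le]

lemma coef_one (j : ℕ) (s : ℝ) (hs : 0 ≤ s) :
    ENNReal.ofReal ((2:ℝ) ^ ((j:ℝ) * (-1 + s))) *
      (ENNReal.ofReal ((2:ℝ)^j) * (ENNReal.ofReal (((2:ℝ)^j)⁻¹)) ^ s) = 1 := by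
  have h2j : ((2:ℝ)^j : ℝ) = (2:ℝ) ^ (j:ℝ) := (Real.rpow_natCast 2 j).symm
  rw [h2j, ← Real.rpow_neg (by norm_num : (0:ℝ) ≤ 2),
    ENNReal.ofReal_rpow_of_pos (Real.rpow_pos_of_pos (by norm_num) _),
    ← Real.rpow_mul (by norm_num : (0:ℝ) ≤ 2),
    ← ENNReal.ofReal_mul (Real.rpow_nonneg (by norm_num) _),
    ← Real.rpow_add (by norm_num : (0:ℝ) < 2),
    ← ENNReal.ofReal_mul (Real.rpow_nonneg (by norm_num) _),
    ← Real.rpow_add (by norm_num : (0:ℝ) < 2)]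
  have : (j:ℝ) * (-1 + s) + ((j:ℝ) + -(j:ℝ) * s) = 0 := by ring
  rw [this, Real.rpow_zero, ENNReal.ofReal_one]


/-- The principal value distribution `ζ^{-1}` belongs to the Besov space `B^{−1+1/p}_{p,∞}(ℝ)`
for every `p ∈ (1,∞]`, i.e. its Littlewood–Paley Besov norm is finite. -/
theorem principal_value_mem_besov
    (hlow h : SchwartzMap ℝ ℝ) (hLP : IsLPpair hlow h)
    (p : ℝ≥0∞) (hp : 1 < p) :
    (⨆ j : ℕ, ENNReal.ofReal ((2 : ℝ) ^ (((j : ℝ) - 1) * (-1 + (1 / p).toReal))) *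
        eLpNorm (pvBlock hlow h j) p volume) ≠ ⊤ := by
  obtain ⟨C₀, hC₀, hb₀⟩ := schwartz_pv_decay hlow
  obtain ⟨C₁, hC₁, hb₁⟩ := schwartz_pv_decay h
  set s : ℝ := (1/p).toReal with hsdef
  have hs : 0 ≤ s := ENNReal.toReal_nonneg
  have hg₁cont : Continuous (fun x : ℝ => C₁ / (1 + |x|)) := by
    apply Continuous.div continuous_const (by continuity)
    intro x; positivity
  set E₀ := eLpNorm (fun x : ℝ => C₀ / (1 + |x|)) p volume with hE₀def
  set E₁ := eLpNorm (fun x : ℝ => C₁ / (1 + |x|)) p volume with hE₁def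
  have hE₀ : E₀ < ⊤ := majorant_eLpNorm_lt_top hC₀ hp
  have hE₁ : E₁ < ⊤ := majorant_eLpNorm_lt_top hC₁ hp
  set W := ENNReal.ofReal ((2:ℝ) ^ ((-1 : ℝ) * (-1 + s))) * E₀ with hWdef
  have hW : W ⊔ E₁ ≠ ⊤ := by
    exact (max_lt (ENNReal.mul_lt_top ENNReal.ofReal_lt_top hE₀) hE₁).ne
  refine ne_top_of_le_ne_top hW (iSup_le fun j => ?_)
  cases j with
  | zero =>
    refine le_trans ?_ le_sup_left
    rw [hWdef]
    simp only [Nat.cast_zero, zero_sub]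
    apply mul_le_mul_right
    apply eLpNorm_mono_real
    intro x
    rw [pvBlock_zero]
    exact hb₀ x
  | succ j =>
    refine le_trans ?_ le_sup_right
    have hmono : eLpNorm (pvBlock hlow h (j+1)) p volume ≤
        eLpNorm (fun x : ℝ => (2:ℝ)^j * ((fun t : ℝ => C₁ / (1 + |t|)) ((2:ℝ)^j * x)))
          p volume := by
      apply eLpNorm_mono_real
      intro x
      rw [Real.norm_eq_abs, pvBlock_succ, abs_mul,
        abs_of_pos (by positivity : (0:ℝ) < (2:ℝ)^j)]
      exact mul_le_mul_of_nonneg_left (hb₁ _) (by positivity)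
    calc ENNReal.ofReal ((2 : ℝ) ^ ((((j+1 : ℕ) : ℝ) - 1) * (-1 + s))) *
        eLpNorm (pvBlock hlow h (j+1)) p volume
        ≤ ENNReal.ofReal ((2 : ℝ) ^ (((j : ℝ)) * (-1 + s))) *
          (ENNReal.ofReal ((2:ℝ)^j) * (ENNReal.ofReal (((2:ℝ)^j)⁻¹)) ^ s * E₁) := by
          rw [show (((j+1 : ℕ) : ℝ) - 1) = (j : ℝ) by push_cast; ring]
          exact mul_le_mul_right (hmono.trans_eq (elp_scale hg₁cont j p)) _
    _ = 1 * E₁ := by rw [← mul_assoc, ← mul_assoc,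
          mul_assoc (ENNReal.ofReal ((2 : ℝ) ^ (((j : ℝ)) * (-1 + s)))),
          coef_one j s hs]
    _ = E₁ := one_mul _
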